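/- Let C be a nonempty weak* compact convex subset of a dual Banach space and let 𝒮 be an arbitrary (possibly infinite) family of commuting weak*-continuous nonexpansive self-maps of C. Then Fix 𝒮 = ⋂_{T ∈ 𝒮} Fix T is nonempty and is a nonexpansive retract of C. -/

import Mathlib

open Filter Topology

open Set NNReal

set_option maxHeartbeats 1000000

open Filter Topology Set NNReal

namespace Stmt15Aux

variable {E : Type*} [NormedAddCommGroup E] [NormedSpace ℝ E]

/-- `R` is a nonexpansive retraction of `C` onto the common fixed set of `ts`. -/
def IsRet (C : Set (WeakDual ℝ E)) (ts : Set (WeakDual ℝ E → WeakDual ℝ E))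
    (R : WeakDual ℝ E → WeakDual ℝ E) : Prop :=
  (∀ x ∈ C, R x ∈ C ∧ ∀ T ∈ ts, T (R x) = R x) ∧
  (∀ y ∈ C, ∀ z ∈ C,
    ‖WeakDual.toStrongDual (R y) - WeakDual.toStrongDual (R z)‖ ≤
      ‖WeakDual.toStrongDual y - WeakDual.toStrongDual z‖) ∧
  (∀ x ∈ C, (∀ T ∈ ts, T x = x) → R x = x)

/-- Weak-star compact convex nonempty sets in the dual are norm-bounded. -/
lemma norm_bounded {C : Set (WeakDual ℝ E)} (hne : C.Nonempty) (hcomp : IsCompact C)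
    (hconv : Convex ℝ C) :
    ∃ M : ℝ, 0 < M ∧ ∀ x ∈ C, ‖WeakDual.toStrongDual x‖ ≤ M := by
  haveI : CompactSpace ↥C := isCompact_iff_compactSpace.mp hcomp
  have hcover : (⋃ n : ℕ, {x : ↥C | ‖WeakDual.toStrongDual (x : WeakDual ℝ E)‖ ≤ n}) = univ := by
    ext x
    simp only [mem_iUnion, mem_setOf_eq, mem_univ, iff_true]
    exact exists_nat_ge _
  have hclosed : ∀ n : ℕ, IsClosed {x : ↥C | ‖WeakDual.toStrongDual (x : WeakDual ℝ E)‖ ≤ n} := by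
    intro n
    have h1 : IsClosed {x : WeakDual ℝ E | ‖WeakDual.toStrongDual x‖ ≤ n} := by
      have := WeakDual.isClosed_closedBall (0 : StrongDual ℝ E) n
      convert this using 1
      ext x
      simp [Metric.mem_closedBall, dist_zero_right]
    exact h1.preimage continuous_subtype_val
  haveI : Nonempty ↥C := hne.to_subtype
  obtain ⟨n, p, hp⟩ : ∃ n : ℕ, ∃ p : ↥C,
      p ∈ interior {x : ↥C | ‖WeakDual.toStrongDual (x : WeakDual ℝ E)‖ ≤ n} := by
    obtain ⟨n, hn⟩ := nonempty_interior_of_iUnion_of_closed hclosed hcover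
    exact ⟨n, hn.some, hn.some_mem⟩
  have h1 : {x : ↥C | ‖WeakDual.toStrongDual (x : WeakDual ℝ E)‖ ≤ n} ∈ 𝓝 p :=
    mem_interior_iff_mem_nhds.mp hp
  rw [nhds_subtype_eq_comap, Filter.mem_comap] at h1
  obtain ⟨W, hW, hWsub⟩ := h1
  have hpC : (p : WeakDual ℝ E) ∈ C := p.2
  have hWb : ∀ x ∈ C ∩ W, ‖WeakDual.toStrongDual x‖ ≤ n := by
    rintro x ⟨hxC, hxW⟩
    have h2 : (⟨x, hxC⟩ : ↥C) ∈ Subtype.val ⁻¹' W := hxW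
    have h3 := hWsub h2
    simp only [mem_setOf_eq] at h3
    exact h3
  clear hp hWsub hcover hclosed
  -- Tube lemma argument
  set p' : WeakDual ℝ E := (p : WeakDual ℝ E) with hp'
  set G : ℝ × WeakDual ℝ E → WeakDual ℝ E := fun q => (1 - q.1) • p' + q.1 • q.2 with hG
  have hGc : Continuous G := by
    apply Continuous.add
    · exact (continuous_const.sub continuous_fst).smul continuous_const
    · exact continuous_fst.smul continuous_snd
  have hsub : ({0} : Set ℝ) ×ˢ C ⊆ G ⁻¹' (interior W) := by
    rintro ⟨s, x⟩ ⟨hs, hx⟩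
    simp only [mem_singleton_iff] at hs
    subst hs
    simp only [mem_preimage, hG, zero_smul, sub_zero, one_smul, add_zero]
    exact mem_interior_iff_mem_nhds.mpr hW
  obtain ⟨u, v, hu, hv, h0u, hCv, huv⟩ :=
    generalized_tube_lemma isCompact_singleton hcomp (hGc.isOpen_preimage _ isOpen_interior) hsub
  obtain ⟨t, ht, htu⟩ := Metric.isOpen_iff.mp hu 0 (h0u rfl)
  set c : ℝ := min (t / 2) 1 with hc
  have hc0 : 0 < c := lt_min (by linarith) one_pos
  have hc1 : c ≤ 1 := min_le_right _ _
  have hcu : c ∈ u := htu (by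
    simp only [Metric.mem_ball, dist_zero_right, Real.norm_eq_abs, abs_of_pos hc0]
    calc c ≤ t / 2 := min_le_left _ _
    _ < t := by linarith)
  have hpn : 0 ≤ (n : ℝ) + ‖WeakDual.toStrongDual p'‖ := by
    have := hWb p' ⟨hpC, mem_of_mem_nhds hW⟩
    linarith [norm_nonneg (WeakDual.toStrongDual p')]
  refine ⟨(n + ‖WeakDual.toStrongDual p'‖) / c + 1, by positivity, ?_⟩
  intro x hx
  have hy : G (c, x) ∈ C ∩ W := by
    constructor
    · exact hconv hpC hx (by linarith) hc0.le (by ring)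
    · exact interior_subset (huv ⟨hcu, hCv hx⟩)
  have hb := hWb _ hy
  have key : c * ‖WeakDual.toStrongDual x‖ ≤ n + ‖WeakDual.toStrongDual p'‖ := by
    have h1 : WeakDual.toStrongDual (G (c, x)) =
        (1 - c) • WeakDual.toStrongDual p' + c • WeakDual.toStrongDual x := by
      simp [hG, map_add, map_smul]
    have h2 : c • WeakDual.toStrongDual x =
        WeakDual.toStrongDual (G (c, x)) - (1 - c) • WeakDual.toStrongDual p' := by
      rw [h1]; abel
    have h3 : ‖c • WeakDual.toStrongDual x‖ ≤
        ‖WeakDual.toStrongDual (G (c, x))‖ + ‖(1 - c) • WeakDual.toStrongDual p'‖ := by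
      rw [h2]; exact norm_sub_le _ _
    rw [norm_smul, norm_smul, Real.norm_eq_abs, Real.norm_eq_abs, abs_of_pos hc0,
      abs_of_nonneg (by linarith : (0:ℝ) ≤ 1 - c)] at h3
    nlinarith [norm_nonneg (WeakDual.toStrongDual p')]
  calc ‖WeakDual.toStrongDual x‖ ≤ (n + ‖WeakDual.toStrongDual p'‖) / c := by
        rw [le_div_iff₀ hc0]; linarith [key]
    _ ≤ (n + ‖WeakDual.toStrongDual p'‖) / c + 1 := by linarith


/-- The fixed-point set (within `C`) of a map continuous on a compact `C` is closed. -/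
lemma closed_fix {C : Set (WeakDual ℝ E)} (hcomp : IsCompact C)
    (T : WeakDual ℝ E → WeakDual ℝ E) (hTc : ContinuousOn T C) :
    IsClosed {x | x ∈ C ∧ T x = x} := by
  haveI : CompactSpace ↥C := isCompact_iff_compactSpace.mp hcomp
  have h1 : IsClosed {x : ↥C | C.restrict T x = (x : WeakDual ℝ E)} :=
    isClosed_eq hTc.restrict continuous_subtype_val
  have h2 : IsCompact (Subtype.val '' {x : ↥C | C.restrict T x = (x : WeakDual ℝ E)}) :=
    (h1.isCompact).image continuous_subtype_val
  have h3 : Subtype.val '' {x : ↥C | C.restrict T x = (x : WeakDual ℝ E)}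
      = {x | x ∈ C ∧ T x = x} := by
    ext x
    constructor
    · rintro ⟨⟨y, hy⟩, hfix, rfl⟩
      exact ⟨hy, hfix⟩
    · rintro ⟨hxC, hfix⟩
      exact ⟨⟨x, hxC⟩, hfix, rfl⟩
  rw [h3] at h2
  exact h2.isClosed

/-- Existence of ultrafilter limits in a compact set. -/
lemma exists_wlim {C : Set (WeakDual ℝ E)} (hcomp : IsCompact C) {ι : Type*} (U : Ultrafilter ι)
    (g : ι → WeakDual ℝ E) (hg : ∀ i, g i ∈ C) :
    ∃ y ∈ C, Tendsto g (U : Filter ι) (𝓝 y) := by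
  have hle : (U.map g : Filter (WeakDual ℝ E)) ≤ 𝓟 C := by
    rw [Ultrafilter.coe_map]
    exact Filter.le_principal_iff.mpr (Filter.mem_map.mpr (Filter.univ_mem' hg))
  obtain ⟨y, hyC, hy⟩ := hcomp.ultrafilter_le_nhds (U.map g) hle
  exact ⟨y, hyC, by rwa [Ultrafilter.coe_map] at hy⟩

/-- Norm bounds pass to weak-star ultrafilter limits. -/
lemma norm_le_of_tendsto {ι : Type*} (U : Ultrafilter ι) {g g' : ι → WeakDual ℝ E}
    {y y' : WeakDual ℝ E} {c : ℝ}
    (hg : Tendsto g (U : Filter ι) (𝓝 y)) (hg' : Tendsto g' (U : Filter ι) (𝓝 y'))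
    (hb : ∀ i, ‖WeakDual.toStrongDual (g i) - WeakDual.toStrongDual (g' i)‖ ≤ c) :
    ‖WeakDual.toStrongDual y - WeakDual.toStrongDual y'‖ ≤ c := by
  have hc0 : 0 ≤ c := by
    obtain ⟨i⟩ := (U : Filter ι).nonempty_of_mem (Filter.univ_mem)
    exact le_trans (norm_nonneg _) (hb i)
  apply ContinuousLinearMap.opNorm_le_bound _ hc0
  intro v
  have h1 : Tendsto (fun i => g i v - g' i v) (U : Filter ι) (𝓝 (y v - y' v)) :=
    (((WeakDual.eval_continuous v).tendsto y).comp hg).sub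
      (((WeakDual.eval_continuous v).tendsto y').comp hg')
  have h2 : ∀ i, ‖g i v - g' i v‖ ≤ c * ‖v‖ := by
    intro i
    have := (WeakDual.toStrongDual (g i) - WeakDual.toStrongDual (g' i)).le_opNorm v
    calc ‖g i v - g' i v‖
        = ‖(WeakDual.toStrongDual (g i) - WeakDual.toStrongDual (g' i)) v‖ := rfl
      _ ≤ ‖WeakDual.toStrongDual (g i) - WeakDual.toStrongDual (g' i)‖ * ‖v‖ := this
      _ ≤ c * ‖v‖ := by
          have := hb i
          have hv := norm_nonneg v
          nlinarith
  have h3 : Tendsto (fun i => ‖g i v - g' i v‖) (U : Filter ι) (𝓝 ‖y v - y' v‖) := h1.norm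
  calc ‖(WeakDual.toStrongDual y - WeakDual.toStrongDual y') v‖ = ‖y v - y' v‖ := rfl
    _ ≤ c * ‖v‖ := le_of_tendsto h3 (Filter.Eventually.of_forall h2)


/-- If `g i → y` weak-star within `C`, `T` is weak-star continuous on `C`, and
`‖T (g i) - g i‖ → 0` in norm, then `y` is a fixed point of `T`. -/
lemma fix_of_tendsto {C : Set (WeakDual ℝ E)} {T : WeakDual ℝ E → WeakDual ℝ E}
    (hTc : ContinuousOn T C) {ι : Type*} (U : Ultrafilter ι) {g : ι → WeakDual ℝ E}
    {y : WeakDual ℝ E} (hy : y ∈ C) (hgC : ∀ i, g i ∈ C)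
    (hg : Tendsto g (U : Filter ι) (𝓝 y)) {b : ι → ℝ}
    (hb0 : Tendsto b (U : Filter ι) (𝓝 0))
    (hb : ∀ i, ‖WeakDual.toStrongDual (T (g i)) - WeakDual.toStrongDual (g i)‖ ≤ b i) :
    T y = y := by
  -- within-C convergence
  have hgin : Tendsto g (U : Filter ι) (𝓝[C] y) :=
    tendsto_nhdsWithin_iff.mpr ⟨hg, Filter.Eventually.of_forall hgC⟩
  have h1 : Tendsto (fun i => T (g i)) (U : Filter ι) (𝓝 (T y)) := (hTc y hy).tendsto.comp hgin
  -- T (g i) - g i → 0 in norm, hence weak-star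
  have h2 : Tendsto (fun i => WeakDual.toStrongDual (T (g i)) - WeakDual.toStrongDual (g i))
      (U : Filter ι) (𝓝 0) :=
    squeeze_zero_norm hb hb0
  have h3 : Tendsto (fun i => T (g i) - g i) (U : Filter ι) (𝓝 (0 : WeakDual ℝ E)) := by
    have := (NormedSpace.Dual.toWeakDual_continuous (𝕜 := ℝ) (E := E)).tendsto 0 |>.comp h2
    have hzero : StrongDual.toWeakDual (0 : StrongDual ℝ E) = (0 : WeakDual ℝ E) :=
      map_zero _
    rw [hzero] at this
    exact this
  have h4 : Tendsto (fun i => g i + (T (g i) - g i)) (U : Filter ι) (𝓝 (y + 0)) := hg.add h3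
  have h5 : Tendsto (fun i => T (g i)) (U : Filter ι) (𝓝 y) := by
    simpa using h4
  exact tendsto_nhds_unique h1 h5


lemma extend {C : Set (WeakDual ℝ E)} (hne : C.Nonempty) (hcomp : IsCompact C)
    (hconv : Convex ℝ C) {M : ℝ} (hM0 : 0 < M)
    (hM : ∀ x ∈ C, ‖WeakDual.toStrongDual x‖ ≤ M)
    (ts : Set (WeakDual ℝ E → WeakDual ℝ E)) {R' : WeakDual ℝ E → WeakDual ℝ E}
    (hR' : IsRet C ts R')
    (hF'c : IsClosed {x | x ∈ C ∧ ∀ T' ∈ ts, T' x = x})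
    {T : WeakDual ℝ E → WeakDual ℝ E} (hTm : Set.MapsTo T C C) (hTc : ContinuousOn T C)
    (hTne : ∀ y ∈ C, ∀ z ∈ C, ‖WeakDual.toStrongDual (T y) - WeakDual.toStrongDual (T z)‖ ≤
      ‖WeakDual.toStrongDual y - WeakDual.toStrongDual z‖)
    (hTF : ∀ x, x ∈ C → (∀ T' ∈ ts, T' x = x) → (∀ T' ∈ ts, T' (T x) = T x)) :
    ∃ R, IsRet C (insert T ts) R := by
  classical
  set ι := WeakDual.toStrongDual (𝕜 := ℝ) (E := E) with hι
  set κ := StrongDual.toWeakDual (𝕜 := ℝ) (E := E) with hκ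
  set F' : Set (WeakDual ℝ E) := {x | x ∈ C ∧ ∀ T' ∈ ts, T' x = x} with hF'
  have hF'sub : F' ⊆ C := fun x hx => hx.1
  have hR'F : ∀ w ∈ C, R' w ∈ F' := fun w hw => ⟨(hR'.1 w hw).1, (hR'.1 w hw).2⟩
  have hF'ne : F'.Nonempty := ⟨R' hne.some, hR'F _ hne.some_mem⟩
  have hTmF : ∀ x ∈ F', T x ∈ F' := fun x hx => ⟨hTm hx.1, hTF x hx.1 hx.2⟩
  have hR'id : ∀ x ∈ F', R' x = x := fun x hx => hR'.2.2 x hx.1 hx.2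
  set D : Set (StrongDual ℝ E) := κ ⁻¹' F' with hD
  have hDc : IsClosed D := hF'c.preimage NormedSpace.Dual.toWeakDual_continuous
  haveI : CompleteSpace ↥D := hDc.completeSpace_coe
  haveI : Nonempty ↥D := ⟨⟨ι hF'ne.some, by
    show κ (ι hF'ne.some) ∈ F'
    exact hF'ne.some_mem⟩⟩
  set ee : ℕ → ℝ := fun n => 1 / (n + 1) with hee
  have hee0 : ∀ n, 0 < ee n := fun n => by positivity
  have hee1 : ∀ n, ee n ≤ 1 := by
    intro n
    rw [hee]
    rw [div_le_one (by positivity)]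
    linarith [Nat.cast_nonneg (α := ℝ) n]
  -- the approximate resolvents
  have hzex : ∀ (n : ℕ), ∀ x ∈ C, ∃ z,
      (z ∈ F' ∧ z = R' ((1 - ee n) • T z + ee n • R' x)) ∧
      ∀ w ∈ F', w = R' ((1 - ee n) • T w + ee n • R' x) → w = z := by
    intro n x hx
    have hcomb : ∀ z ∈ F', (1 - ee n) • T z + ee n • R' x ∈ C := by
      intro z hz
      exact hconv (hTm (hF'sub hz)) ((hR'.1 x hx).1)
        (by linarith [hee1 n]) (hee0 n).le (by ring)
    set Φ : ↥D → ↥D := fun y =>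
      ⟨ι (R' ((1 - ee n) • T (κ ↑y) + ee n • R' x)), by
        show κ (ι _) ∈ F'
        exact hR'F _ (hcomb _ y.2)⟩ with hΦdef
    set K : ℝ≥0 := (1 - ee n).toNNReal with hK
    have hKcoe : (K : ℝ) = 1 - ee n := Real.coe_toNNReal _ (by linarith [hee1 n])
    have hlip : ∀ y y' : ↥D, dist (Φ y) (Φ y') ≤ (K : ℝ) * dist y y' := by
      intro y y'
      have hy : κ ↑y ∈ F' := y.2
      have hy' : κ ↑y' ∈ F' := y'.2
      rw [Subtype.dist_eq, dist_eq_norm, Subtype.dist_eq, dist_eq_norm]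
      have h1 : ‖ι (R' ((1 - ee n) • T (κ ↑y) + ee n • R' x)) -
          ι (R' ((1 - ee n) • T (κ ↑y') + ee n • R' x))‖ ≤
          ‖ι ((1 - ee n) • T (κ ↑y) + ee n • R' x) -
           ι ((1 - ee n) • T (κ ↑y') + ee n • R' x)‖ :=
        hR'.2.1 _ (hcomb _ hy) _ (hcomb _ hy')
      have h2 : ι ((1 - ee n) • T (κ ↑y) + ee n • R' x) -
          ι ((1 - ee n) • T (κ ↑y') + ee n • R' x) =
          (1 - ee n) • (ι (T (κ ↑y)) - ι (T (κ ↑y'))) := by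
        rw [← map_sub]
        have : ((1 - ee n) • T (κ ↑y) + ee n • R' x) - ((1 - ee n) • T (κ ↑y') + ee n • R' x)
            = (1 - ee n) • (T (κ ↑y) - T (κ ↑y')) := by
          rw [smul_sub]; abel
        rw [this, map_smul, map_sub]
      have h3 : ‖ι (T (κ ↑y)) - ι (T (κ ↑y'))‖ ≤ ‖ι (κ ↑y) - ι (κ ↑y')‖ :=
        hTne _ (hF'sub hy) _ (hF'sub hy')
      have h4 : ι (κ (↑y : StrongDual ℝ E)) = (↑y : StrongDual ℝ E) := rfl
      have h4' : ι (κ (↑y' : StrongDual ℝ E)) = (↑y' : StrongDual ℝ E) := rfl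
      calc ‖(Φ y : StrongDual ℝ E) - (Φ y' : StrongDual ℝ E)‖
          ≤ ‖(1 - ee n) • (ι (T (κ ↑y)) - ι (T (κ ↑y')))‖ := by
            rw [← h2]; exact h1
        _ = (1 - ee n) * ‖ι (T (κ ↑y)) - ι (T (κ ↑y'))‖ := by
            rw [norm_smul, Real.norm_eq_abs, abs_of_nonneg (by linarith [hee1 n])]
        _ ≤ (K : ℝ) * ‖(↑y : StrongDual ℝ E) - ↑y'‖ := by
            rw [hKcoe]
            apply mul_le_mul_of_nonneg_left _ (by linarith [hee1 n])
            rw [← h4, ← h4']; exact h3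
    have hΦcontr : ContractingWith K Φ := by
      constructor
      · rw [← NNReal.coe_lt_coe, NNReal.coe_one, hKcoe]
        linarith [hee0 n]
      · exact LipschitzWith.of_dist_le_mul hlip
    set zfix : ↥D := ContractingWith.fixedPoint Φ hΦcontr with hzfix
    have hzfixpt : Φ zfix = zfix := hΦcontr.fixedPoint_isFixedPt
    refine ⟨κ ↑zfix, ⟨zfix.2, ?_⟩, ?_⟩
    · -- fixed point equation
      have := congrArg (fun w : ↥D => κ ↑w) hzfixpt
      exact this.symm
    · -- uniqueness
      intro w hw hweq
      have hwD : ι w ∈ D := by show κ (ι w) ∈ F'; exact hw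
      have hfix : Φ ⟨ι w, hwD⟩ = ⟨ι w, hwD⟩ := by
        apply Subtype.ext
        show ι (R' ((1 - ee n) • T (κ (ι w)) + ee n • R' x)) = ι w
        exact congrArg ι hweq.symm
      have := hΦcontr.fixedPoint_unique (f := Φ) (x := ⟨ι w, hwD⟩) hfix
      have h2 := congrArg (fun w : ↥D => κ ↑w) this
      exact h2
  -- choose the resolvents
  choose! z hzmem hzuniq using hzex
  have hzF : ∀ n, ∀ x ∈ C, z n x ∈ F' := fun n x hx => (hzmem n x hx).1
  have hzeq : ∀ n, ∀ x ∈ C, z n x = R' ((1 - ee n) • T (z n x) + ee n • R' x) :=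
    fun n x hx => (hzmem n x hx).2
  clear hzmem
  -- nonexpansiveness of the resolvents
  have hP2 : ∀ n, ∀ x ∈ C, ∀ x' ∈ C,
      ‖WeakDual.toStrongDual (z n x) - WeakDual.toStrongDual (z n x')‖ ≤
        ‖WeakDual.toStrongDual x - WeakDual.toStrongDual x'‖ := by
    intro n x hx x' hx'
    have hzC : z n x ∈ C := hF'sub (hzF n x hx)
    have hzC' : z n x' ∈ C := hF'sub (hzF n x' hx')
    have hcomb : (1 - ee n) • T (z n x) + ee n • R' x ∈ C :=
      hconv (hTm hzC) ((hR'.1 x hx).1) (by linarith [hee1 n]) (hee0 n).le (by ring)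
    have hcomb' : (1 - ee n) • T (z n x') + ee n • R' x' ∈ C :=
      hconv (hTm hzC') ((hR'.1 x' hx').1) (by linarith [hee1 n]) (hee0 n).le (by ring)
    set a := ‖ι (z n x) - ι (z n x')‖ with ha
    set b := ‖ι (R' x) - ι (R' x')‖ with hb
    have key : a ≤ (1 - ee n) * a + ee n * b := by
      have h1 : a ≤ ‖ι ((1 - ee n) • T (z n x) + ee n • R' x) -
          ι ((1 - ee n) • T (z n x') + ee n • R' x')‖ := by
        rw [ha]
        nth_rewrite 1 [hzeq n x hx]
        nth_rewrite 1 [hzeq n x' hx']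
        exact hR'.2.1 _ hcomb _ hcomb'
      have h2 : ι ((1 - ee n) • T (z n x) + ee n • R' x) -
          ι ((1 - ee n) • T (z n x') + ee n • R' x') =
          (1 - ee n) • (ι (T (z n x)) - ι (T (z n x'))) + ee n • (ι (R' x) - ι (R' x')) := by
        rw [← map_sub]
        have : ((1 - ee n) • T (z n x) + ee n • R' x) -
            ((1 - ee n) • T (z n x') + ee n • R' x') =
            (1 - ee n) • (T (z n x) - T (z n x')) + ee n • (R' x - R' x') := by
          rw [smul_sub, smul_sub]; abel
        rw [this, map_add, map_smul, map_smul, map_sub, map_sub]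
      have h3 : ‖ι (T (z n x)) - ι (T (z n x'))‖ ≤ a := hTne _ hzC _ hzC'
      calc a ≤ ‖(1 - ee n) • (ι (T (z n x)) - ι (T (z n x'))) +
            ee n • (ι (R' x) - ι (R' x'))‖ := by rw [← h2]; exact h1
        _ ≤ ‖(1 - ee n) • (ι (T (z n x)) - ι (T (z n x')))‖ +
            ‖ee n • (ι (R' x) - ι (R' x'))‖ := norm_add_le _ _
        _ = (1 - ee n) * ‖ι (T (z n x)) - ι (T (z n x'))‖ + ee n * b := by
            rw [norm_smul, norm_smul, Real.norm_eq_abs, Real.norm_eq_abs,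
              abs_of_nonneg (by linarith [hee1 n]), abs_of_pos (hee0 n)]
        _ ≤ (1 - ee n) * a + ee n * b := by
            have := mul_le_mul_of_nonneg_left h3 (by linarith [hee1 n] : (0:ℝ) ≤ 1 - ee n)
            linarith
    have hab : a ≤ b := by nlinarith [hee0 n]
    calc a ≤ b := hab
      _ ≤ ‖ι x - ι x'‖ := hR'.2.1 x hx x' hx'
  -- approximate fixed point property
  have hP4 : ∀ n, ∀ x ∈ C,
      ‖WeakDual.toStrongDual (T (z n x)) - WeakDual.toStrongDual (z n x)‖ ≤ ee n * (2 * M) := by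
    intro n x hx
    have hzC : z n x ∈ C := hF'sub (hzF n x hx)
    have hTzF : T (z n x) ∈ F' := hTmF _ (hzF n x hx)
    have hTzC : T (z n x) ∈ C := hF'sub hTzF
    have hcomb : (1 - ee n) • T (z n x) + ee n • R' x ∈ C :=
      hconv (hTm hzC) ((hR'.1 x hx).1) (by linarith [hee1 n]) (hee0 n).le (by ring)
    have h0 : R' (T (z n x)) = T (z n x) := hR'id _ hTzF
    have h1 : ‖ι (z n x) - ι (T (z n x))‖ ≤
        ‖ι ((1 - ee n) • T (z n x) + ee n • R' x) - ι (T (z n x))‖ := by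
      nth_rewrite 1 [hzeq n x hx]
      nth_rewrite 2 [← h0]
      exact hR'.2.1 _ hcomb _ hTzC
    have h2 : ι ((1 - ee n) • T (z n x) + ee n • R' x) - ι (T (z n x)) =
        ee n • (ι (R' x) - ι (T (z n x))) := by
      rw [← map_sub]
      have : ((1 - ee n) • T (z n x) + ee n • R' x) - T (z n x) =
          ee n • (R' x - T (z n x)) := by
        rw [smul_sub, sub_smul, one_smul]; abel
      rw [this, map_smul, map_sub]
    have h3 : ‖ι (R' x) - ι (T (z n x))‖ ≤ 2 * M := by
      calc ‖ι (R' x) - ι (T (z n x))‖ ≤ ‖ι (R' x)‖ + ‖ι (T (z n x))‖ := norm_sub_le _ _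
        _ ≤ 2 * M := by
            have := hM _ ((hR'.1 x hx).1)
            have := hM _ hTzC
            linarith
    calc ‖ι (T (z n x)) - ι (z n x)‖ = ‖ι (z n x) - ι (T (z n x))‖ := norm_sub_rev _ _
      _ ≤ ‖ee n • (ι (R' x) - ι (T (z n x)))‖ := by rw [← h2]; exact h1
      _ = ee n * ‖ι (R' x) - ι (T (z n x))‖ := by
          rw [norm_smul, Real.norm_eq_abs, abs_of_pos (hee0 n)]
      _ ≤ ee n * (2 * M) := mul_le_mul_of_nonneg_left h3 (hee0 n).le
  -- the resolvents fix common fixed points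
  have hP3 : ∀ n, ∀ x ∈ C, (∀ T' ∈ ts, T' x = x) → T x = x → z n x = x := by
    intro n x hx hts hTx
    have hxF : x ∈ F' := ⟨hx, hts⟩
    have : x = R' ((1 - ee n) • T x + ee n • R' x) := by
      rw [hTx, hR'id x hxF, ← add_smul, sub_add_cancel, one_smul, hR'id x hxF]
    exact (hzuniq n x hx x hxF this).symm
  -- pass to an ultrafilter limit
  set U0 : Ultrafilter ℕ := Ultrafilter.of atTop with hU0
  have hU0le : (U0 : Filter ℕ) ≤ atTop := Ultrafilter.of_le _
  have hlim : ∀ x, x ∈ C → ∃ y ∈ C, Tendsto (fun n => z n x) (U0 : Filter ℕ) (𝓝 y) :=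
    fun x hx => exists_wlim hcomp U0 _ (fun n => hF'sub (hzF n x hx))
  choose! R hRC hRt using hlim
  have hRF : ∀ x ∈ C, R x ∈ F' := by
    intro x hx
    exact hF'c.mem_of_tendsto (hRt x hx) (Filter.Eventually.of_forall fun n => hzF n x hx)
  have hb0 : Tendsto (fun n => ee n * (2 * M)) (U0 : Filter ℕ) (𝓝 0) := by
    have h1 : Tendsto (fun n : ℕ => ee n * (2 * M)) atTop (𝓝 (0 * (2 * M))) :=
      tendsto_one_div_add_atTop_nhds_zero_nat.mul_const _
    rw [zero_mul] at h1
    exact h1.mono_left hU0le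
  have hRfix : ∀ x ∈ C, T (R x) = R x := by
    intro x hx
    exact fix_of_tendsto hTc U0 (hRC x hx) (fun n => hF'sub (hzF n x hx)) (hRt x hx) hb0
      (fun n => hP4 n x hx)
  refine ⟨R, ?_, ?_, ?_⟩
  · intro x hx
    refine ⟨hRC x hx, ?_⟩
    intro T'' hT''
    rcases hT'' with h | h
    · rw [h]; exact hRfix x hx
    · exact (hRF x hx).2 T'' h
  · intro y hy z' hz'
    exact norm_le_of_tendsto U0 (hRt y hy) (hRt z' hz') (fun n => hP2 n y hy z' hz')
  · intro x hx hfix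
    have hTx : T x = x := hfix T (Set.mem_insert _ _)
    have hts : ∀ T' ∈ ts, T' x = x := fun T' h => hfix T' (Set.mem_insert_of_mem _ h)
    have hconst : Tendsto (fun _ : ℕ => x) (U0 : Filter ℕ) (𝓝 (R x)) := by
      have := hRt x hx
      convert this using 1
      funext n
      exact (hP3 n x hx hts hTx).symm
    exact (tendsto_nhds_unique hconst tendsto_const_nhds)


lemma closed_fixSet {C : Set (WeakDual ℝ E)} (hcomp : IsCompact C)
    (ts : Set (WeakDual ℝ E → WeakDual ℝ E)) (h : ∀ T ∈ ts, ContinuousOn T C) :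
    IsClosed {x | x ∈ C ∧ ∀ T ∈ ts, T x = x} := by
  have heq : {x | x ∈ C ∧ ∀ T ∈ ts, T x = x} =
      C ∩ ⋂ T ∈ ts, {x | x ∈ C ∧ T x = x} := by
    ext x
    simp only [mem_setOf_eq, mem_inter_iff, mem_iInter]
    constructor
    · rintro ⟨hx, hfix⟩; exact ⟨hx, fun T hT => ⟨hx, hfix T hT⟩⟩
    · rintro ⟨hx, hfix⟩; exact ⟨hx, fun T hT => (hfix T hT).2⟩
  rw [heq]
  exact hcomp.isClosed.inter (isClosed_biInter fun T hT => closed_fix hcomp T (h T hT))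

lemma finset_ret {C : Set (WeakDual ℝ E)} (hne : C.Nonempty) (hcomp : IsCompact C)
    (hconv : Convex ℝ C) {M : ℝ} (hM0 : 0 < M)
    (hM : ∀ x ∈ C, ‖WeakDual.toStrongDual x‖ ≤ M)
    (S : Set (WeakDual ℝ E → WeakDual ℝ E))
    (hTmaps : ∀ T ∈ S, Set.MapsTo T C C)
    (hTc : ∀ T ∈ S, ContinuousOn T C)
    (hTne : ∀ T ∈ S, ∀ y ∈ C, ∀ z ∈ C,
      ‖WeakDual.toStrongDual (T y) - WeakDual.toStrongDual (T z)‖ ≤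
        ‖WeakDual.toStrongDual y - WeakDual.toStrongDual z‖)
    (hcomm : ∀ T ∈ S, ∀ T' ∈ S, ∀ x ∈ C, T (T' x) = T' (T x))
    (t : Finset (WeakDual ℝ E → WeakDual ℝ E)) :
    ↑t ⊆ S → ∃ R, IsRet C (↑t) R := by
  classical
  induction t using Finset.induction_on with
  | empty =>
    intro _
    refine ⟨id, fun x hx => ⟨hx, ?_⟩, fun y _ z _ => le_refl _, fun x _ _ => rfl⟩
    intro T hT
    simp at hT
  | insert T t hTt ih =>
    intro hsub
    have hTS : T ∈ S := hsub (by simp)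
    have htS : ↑t ⊆ S := fun f hf => hsub (by simp [hf])
    obtain ⟨R', hR'⟩ := ih htS
    have hF'c : IsClosed {x | x ∈ C ∧ ∀ T' ∈ (↑t : Set (WeakDual ℝ E → WeakDual ℝ E)), T' x = x} :=
      closed_fixSet hcomp _ (fun T' hT' => hTc T' (htS hT'))
    have hTF : ∀ x, x ∈ C → (∀ T' ∈ (↑t : Set (WeakDual ℝ E → WeakDual ℝ E)), T' x = x) →
        (∀ T' ∈ (↑t : Set (WeakDual ℝ E → WeakDual ℝ E)), T' (T x) = T x) := by
      intro x hx hfix T' hT'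
      have h1 := hcomm T hTS T' (htS hT') x hx
      rw [hfix T' hT'] at h1
      exact h1.symm
    obtain ⟨R, hR⟩ := extend hne hcomp hconv hM0 hM (↑t) hR' hF'c (hTmaps T hTS)
      (hTc T hTS) (hTne T hTS) hTF
    refine ⟨R, ?_⟩
    have : (↑(insert T t) : Set (WeakDual ℝ E → WeakDual ℝ E)) =
        insert T (↑t : Set (WeakDual ℝ E → WeakDual ℝ E)) := Finset.coe_insert T t
    rwa [this]


end Stmt15Aux

open Stmt15Aux in
/-- An arbitrary commuting family `𝒮` of weak*-continuous
nonexpansive self-maps of a nonempty weak* compact convex set `C` has a nonempty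
common fixed point set `Fix 𝒮` which is a nonexpansive retract of `C`. -/
theorem stmt15 {E : Type*} [NormedAddCommGroup E] [NormedSpace ℝ E]
    (C : Set (WeakDual ℝ E)) (hne : C.Nonempty) (hcomp : IsCompact C) (hconv : Convex ℝ C)
    (S : Set (WeakDual ℝ E → WeakDual ℝ E))
    (hTmaps : ∀ T ∈ S, Set.MapsTo T C C)
    (hTc : ∀ T ∈ S, ContinuousOn T C)
    (hTne : ∀ T ∈ S, ∀ y ∈ C, ∀ z ∈ C,
      ‖WeakDual.toStrongDual (T y - T z)‖ ≤ ‖WeakDual.toStrongDual (y - z)‖)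
    (hcomm : ∀ T ∈ S, ∀ T' ∈ S, ∀ x ∈ C, T (T' x) = T' (T x)) :
    {x | x ∈ C ∧ ∀ T ∈ S, T x = x}.Nonempty ∧
    ∃ R : WeakDual ℝ E → WeakDual ℝ E,
      Set.MapsTo R C {x | x ∈ C ∧ ∀ T ∈ S, T x = x} ∧
      (∀ y ∈ C, ∀ z ∈ C,
        ‖WeakDual.toStrongDual (R y - R z)‖ ≤ ‖WeakDual.toStrongDual (y - z)‖) ∧
      (∀ x, (x ∈ C ∧ ∀ T ∈ S, T x = x) → R x = x) := by
  classical
  obtain ⟨M, hM0, hM⟩ := norm_bounded hne hcomp hconv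
  -- rephrase nonexpansiveness
  have hTne' : ∀ T ∈ S, ∀ y ∈ C, ∀ z ∈ C,
      ‖WeakDual.toStrongDual (T y) - WeakDual.toStrongDual (T z)‖ ≤
        ‖WeakDual.toStrongDual y - WeakDual.toStrongDual z‖ := by
    intro T hT y hy z hz
    have := hTne T hT y hy z hz
    rwa [map_sub, map_sub] at this
  -- retractions for each finite subfamily
  have hRet : ∀ t : Finset ↥S, ∃ R,
      IsRet C (↑(t.image Subtype.val) : Set (WeakDual ℝ E → WeakDual ℝ E)) R := by
    intro t
    apply finset_ret hne hcomp hconv hM0 hM S hTmaps hTc hTne' hcomm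
    intro f hf
    simp only [Finset.coe_image, Set.mem_image, Finset.mem_coe] at hf
    obtain ⟨a, _, rfl⟩ := hf
    exact a.2
  choose Rt hRt using hRet
  haveI : Nonempty (Finset ↥S) := ⟨∅⟩
  set V : Ultrafilter (Finset ↥S) := Ultrafilter.of atTop with hV
  have hVle : (V : Filter (Finset ↥S)) ≤ atTop := Ultrafilter.of_le _
  have hlim : ∀ x, x ∈ C → ∃ y, y ∈ C ∧
      Tendsto (fun t => Rt t x) (V : Filter (Finset ↥S)) (𝓝 y) := by
    intro x hx
    obtain ⟨y, hy, hty⟩ := exists_wlim hcomp V (fun t => Rt t x)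
      (fun t => ((hRt t).1 x hx).1)
    exact ⟨y, hy, hty⟩
  choose! R hRC hRtend using hlim
  have hRfix : ∀ x ∈ C, ∀ T ∈ S, T (R x) = R x := by
    intro x hx T hT
    have hclosed : IsClosed {y | y ∈ C ∧ T y = y} := closed_fix hcomp T (hTc T hT)
    have hev : ∀ᶠ t in (V : Filter (Finset ↥S)), Rt t x ∈ {y | y ∈ C ∧ T y = y} := by
      have hmem : {t : Finset ↥S | ({⟨T, hT⟩} : Finset ↥S) ≤ t} ∈ (V : Filter (Finset ↥S)) :=
        hVle (Filter.mem_atTop ({⟨T, hT⟩} : Finset ↥S))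
      apply Filter.mem_of_superset hmem
      intro t ht
      have hTmem : T ∈ (↑(t.image Subtype.val) : Set (WeakDual ℝ E → WeakDual ℝ E)) := by
        simp only [Finset.coe_image, Set.mem_image, Finset.mem_coe]
        exact ⟨⟨T, hT⟩, Finset.singleton_subset_iff.mp ht, rfl⟩
      exact ⟨((hRt t).1 x hx).1, ((hRt t).1 x hx).2 T hTmem⟩
    have := hclosed.mem_of_tendsto (hRtend x hx) hev
    exact this.2
  have hRmaps : Set.MapsTo R C {x | x ∈ C ∧ ∀ T ∈ S, T x = x} := by
    intro x hx
    exact ⟨hRC x hx, fun T hT => hRfix x hx T hT⟩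
  constructor
  · exact ⟨R hne.some, hRmaps hne.some_mem⟩
  refine ⟨R, hRmaps, ?_, ?_⟩
  · intro y hy z hz
    rw [map_sub, map_sub]
    exact norm_le_of_tendsto V (hRtend y hy) (hRtend z hz)
      (fun t => (hRt t).2.1 y hy z hz)
  · rintro x ⟨hx, hfix⟩
    have hconst : Tendsto (fun _ : Finset ↥S => x) (V : Filter (Finset ↥S)) (𝓝 (R x)) := by
      have := hRtend x hx
      convert this using 1
      funext t
      refine ((hRt t).2.2 x hx ?_).symm
      intro T' hT'
      simp only [Finset.coe_image, Set.mem_image, Finset.mem_coe] at hT'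
      obtain ⟨a, _, rfl⟩ := hT'
      exact hfix a.1 a.2
    exact tendsto_nhds_unique hconst tendsto_const_nhds
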